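/- Let q ∈ S², let G : ℝ³ → [0,∞) be Borel measurable, and suppose c > 0 satisfies √(G(x)/2) ≥ c for every x ∈ ℝ³ with ‖x − q‖ ≥ 1/4, ‖x + q‖ ≥ 1/4 and ‖x‖ ≥ 1/2. Then for every continuously differentiable w : ℝ → ℝ³ with w(t) → −q as t → −∞ and w(t) → q as t → +∞, one has ∫_ℝ [(‖w(t)‖² − 1)² + G(w(t))/2 + ‖w'(t)‖²] dt ≥ c/2 (the integral of the nonnegative integrand, possibly +∞). In particular, for such G the transition energy between q and −q is strictly positive. -/

import Mathlib

open MeasureTheory Filter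
open scoped RealInnerProductSpace

/-- The cross product on Euclidean `ℝ³`. -/
noncomputable def cross3 (a b : EuclideanSpace ℝ (Fin 3)) : EuclideanSpace ℝ (Fin 3) :=
  (WithLp.equiv 2 (Fin 3 → ℝ)).symm
    (crossProduct ((WithLp.equiv 2 (Fin 3 → ℝ)) a) ((WithLp.equiv 2 (Fin 3 → ℝ)) b))

/-- if `√(G/2) ≥ c` away from `±q` and away from the ball of radius `1/2`,
then any `C¹` chirality profile connecting `−q` to `q` has penalized energy at least `c/2`;
in particular the soft-penalized transition energy between `q` and `−q` is positive. -/
theorem stmt10 (q : EuclideanSpace ℝ (Fin 3)) (hq : ‖q‖ = 1)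
    (G : EuclideanSpace ℝ (Fin 3) → ℝ) (hGnn : ∀ x, 0 ≤ G x) (hGmeas : Measurable G)
    (c : ℝ) (hc : 0 < c)
    (hcG : ∀ x : EuclideanSpace ℝ (Fin 3),
      1 / 4 ≤ ‖x - q‖ → 1 / 4 ≤ ‖x + q‖ → 1 / 2 ≤ ‖x‖ → c ≤ Real.sqrt (G x / 2))
    (w : ℝ → EuclideanSpace ℝ (Fin 3)) (hw : ContDiff ℝ 1 w)
    (hbot : Tendsto w atBot (nhds (-q))) (htop : Tendsto w atTop (nhds q)) :
    ENNReal.ofReal (c / 2)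
      ≤ ∫⁻ t : ℝ, ENNReal.ofReal ((‖w t‖ ^ 2 - 1) ^ 2 + G (w t) / 2 + ‖deriv w t‖ ^ 2) := by
  have hwc : Continuous w := hw.continuous
  have hcont : Continuous (deriv w) := hw.continuous_deriv le_rfl
  have hfc : Continuous fun t => ‖w t - q‖ := (hwc.sub continuous_const).norm
  have hq2 : ‖q + q‖ = 2 := by
    have h : q + q = (2 : ℝ) • q := (two_smul ℝ q).symm
    rw [h, norm_smul, hq]; norm_num
  -- pick S with ‖w S + q‖ ≤ 1
  obtain ⟨S, hS⟩ : ∃ S, ‖w S + q‖ ≤ 1 := by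
    have h := (Metric.tendsto_nhds.mp hbot) 1 one_pos
    obtain ⟨S, hS⟩ := h.exists
    refine ⟨S, ?_⟩
    rw [dist_eq_norm, sub_neg_eq_add] at hS
    exact hS.le
  have hfS : (1 : ℝ) / 2 ≤ ‖w S - q‖ := by
    have h1 := norm_sub_norm_le (q + q) (w S + q)
    have h2 : (q + q) - (w S + q) = q - w S := by abel
    rw [h2, norm_sub_rev] at h1
    linarith [hq2 ▸ h1]
  -- pick T ≥ S with ‖w T - q‖ ≤ 1/4
  obtain ⟨T, hT1, hT2⟩ : ∃ T, ‖w T - q‖ ≤ 1 / 4 ∧ S ≤ T := by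
    have h := (Metric.tendsto_nhds.mp htop) (1 / 4) (by norm_num)
    obtain ⟨T, h1, h2⟩ := (h.and (eventually_ge_atTop S)).exists
    rw [dist_eq_norm] at h1
    exact ⟨T, h1.le, h2⟩
  -- entrance time b
  set Bs : Set ℝ := {t | S ≤ t ∧ ‖w t - q‖ ≤ 1 / 4} with hBs
  have hBclosed : IsClosed Bs :=
    (isClosed_le continuous_const continuous_id).inter (isClosed_le hfc continuous_const)
  have hBne : Bs.Nonempty := ⟨T, hT2, hT1⟩
  have hBbdd : BddBelow Bs := ⟨S, fun t ht => ht.1⟩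
  set b := sInf Bs with hbdef
  have hbmem : b ∈ Bs := hBclosed.csInf_mem hBne hBbdd
  have hSb : S ≤ b := hbmem.1
  have hfb : ‖w b - q‖ ≤ 1 / 4 := hbmem.2
  have hbmin : ∀ t ∈ Bs, b ≤ t := fun t ht => csInf_le hBbdd ht
  -- exit time a
  set As : Set ℝ := {t | t ≤ b ∧ 1 / 2 ≤ ‖w t - q‖} with hAs
  have hAclosed : IsClosed As :=
    (isClosed_le continuous_id continuous_const).inter (isClosed_le continuous_const hfc)
  have hSA : S ∈ As := ⟨hSb, hfS⟩
  have hAbdd : BddAbove As := ⟨b, fun t ht => ht.1⟩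
  set a := sSup As with hadef
  have hamem : a ∈ As := hAclosed.csSup_mem ⟨S, hSA⟩ hAbdd
  have haleb : a ≤ b := hamem.1
  have hfa : (1 : ℝ) / 2 ≤ ‖w a - q‖ := hamem.2
  have hSa : S ≤ a := le_csSup hAbdd hSA
  have hamax : ∀ t ∈ As, t ≤ a := fun t ht => le_csSup hAbdd ht
  have hab : a < b := lt_of_le_of_ne haleb (fun h => by rw [h] at hfa; linarith)
  -- pointwise region facts on Ioo a b
  have hregion : ∀ t ∈ Set.Ioo a b,
      2 * c * ‖deriv w t‖ ≤ (‖w t‖ ^ 2 - 1) ^ 2 + G (w t) / 2 + ‖deriv w t‖ ^ 2 := by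
    intro t ht
    have h14 : 1 / 4 ≤ ‖w t - q‖ := by
      by_contra h
      push_neg at h
      exact absurd (hbmin t ⟨hSa.trans ht.1.le, h.le⟩) (not_le.mpr ht.2)
    have h12 : ‖w t - q‖ ≤ 1 / 2 := by
      by_contra h
      push_neg at h
      exact absurd (hamax t ⟨ht.2.le, h.le⟩) (not_le.mpr ht.1)
    have hx : (1 : ℝ) / 2 ≤ ‖w t‖ := by
      have h1 := norm_sub_norm_le q (q - w t)
      have h2 : q - (q - w t) = w t := by abel
      rw [h2, norm_sub_rev] at h1
      rw [hq] at h1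
      linarith
    have hxq : (1 : ℝ) / 4 ≤ ‖w t + q‖ := by
      have h1 := norm_sub_norm_le (q + q) (q - w t)
      have h2 : (q + q) - (q - w t) = w t + q := by abel
      rw [h2, norm_sub_rev] at h1
      rw [hq2] at h1
      linarith
    have hG2 : c ^ 2 ≤ G (w t) / 2 := by
      have h := hcG (w t) h14 hxq hx
      have hs := Real.sq_sqrt (by linarith [hGnn (w t)] : (0 : ℝ) ≤ G (w t) / 2)
      nlinarith [Real.sqrt_nonneg (G (w t) / 2)]
    nlinarith [sq_nonneg (c - ‖deriv w t‖), sq_nonneg (‖w t‖ ^ 2 - 1)]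
  -- FTC and length bound
  have hFTC : ∫ t in a..b, deriv w t = w b - w a :=
    intervalIntegral.integral_deriv_eq_sub (fun t _ => (hw.differentiable one_ne_zero) t)
      (hcont.intervalIntegrable a b)
  have hlen : (1 : ℝ) / 4 ≤ ∫ t in a..b, ‖deriv w t‖ := by
    have h1 := norm_sub_norm_le (w a - q) (w b - q)
    have h2 : (w a - q) - (w b - q) = w a - w b := by abel
    rw [h2] at h1
    rw [norm_sub_rev (w a) (w b)] at h1
    have h3 : (1 : ℝ) / 4 ≤ ‖w b - w a‖ := by linarith
    have h4 : ‖∫ t in a..b, deriv w t‖ ≤ ∫ t in a..b, ‖deriv w t‖ :=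
      intervalIntegral.norm_integral_le_integral_norm hab.le
    rw [hFTC] at h4
    linarith
  -- integrability
  have hints : IntegrableOn (fun t => 2 * c * ‖deriv w t‖) (Set.Ioo a b) :=
    (continuous_const.mul hcont.norm).integrableOn_Icc.mono_set Set.Ioo_subset_Icc_self
  have hIoo : c / 2 ≤ ∫ t in Set.Ioo a b, 2 * c * ‖deriv w t‖ := by
    have h1 : ∫ t in Set.Ioo a b, 2 * c * ‖deriv w t‖
        = ∫ t in a..b, 2 * c * ‖deriv w t‖ := by
      rw [intervalIntegral.integral_of_le hab.le, integral_Ioc_eq_integral_Ioo]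
    have h2 : ∫ t in a..b, 2 * c * ‖deriv w t‖ = 2 * c * ∫ t in a..b, ‖deriv w t‖ :=
      intervalIntegral.integral_const_mul _ _
    rw [h1, h2]
    nlinarith
  calc ENNReal.ofReal (c / 2)
      ≤ ENNReal.ofReal (∫ t in Set.Ioo a b, 2 * c * ‖deriv w t‖) :=
        ENNReal.ofReal_le_ofReal hIoo
    _ = ∫⁻ t in Set.Ioo a b, ENNReal.ofReal (2 * c * ‖deriv w t‖) :=
        ofReal_integral_eq_lintegral_ofReal hints
          (Filter.Eventually.of_forall fun t => by positivity)
    _ ≤ ∫⁻ t in Set.Ioo a b,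
          ENNReal.ofReal ((‖w t‖ ^ 2 - 1) ^ 2 + G (w t) / 2 + ‖deriv w t‖ ^ 2) := by
        refine lintegral_mono_ae ?_
        filter_upwards [ae_restrict_mem measurableSet_Ioo] with t ht
        exact ENNReal.ofReal_le_ofReal (hregion t ht)
    _ ≤ ∫⁻ t : ℝ, ENNReal.ofReal ((‖w t‖ ^ 2 - 1) ^ 2 + G (w t) / 2 + ‖deriv w t‖ ^ 2) :=
        setLIntegral_le_lintegral _ _
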